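/- The strategy profile (τ_A*, τ_T*) with τ_T* = 1/N_T and τ_A* = max{0, (N_A(σ_I−σ_S)+δ̄)/(N_A(σ_I−σ_C+δ̄))} (the latter when δ̄ > N_A(σ_S−σ_I), else 0) is a Nash equilibrium of the stage game: neither player can improve its payoff by unilaterally changing its access probability. -/

import Mathlib

lemma amgm (m : ℕ) (c d : ℝ) (h1 : 0 ≤ c - d) (h2 : 0 ≤ c + m * d) :
    (c + m * d) * (c - d) ^ m ≤ c ^ (m + 1) := by
  induction m with
  | zero => simpa using h2
  | succ m ih =>
    have hm : (0:ℝ) ≤ m := Nat.cast_nonneg m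
    push_cast at h2 ⊢
    have hc : 0 ≤ c := by nlinarith
    have hmd : 0 ≤ c + m * d := by
      rcases le_or_gt 0 d with hd | hd
      · nlinarith
      · nlinarith
    have ih' := ih hmd
    have step : (c + (m + 1) * d) * (c - d) ≤ c * (c + m * d) := by nlinarith [sq_nonneg d]
    calc (c + (m+1)*d) * (c-d)^(m+1)
        = ((c + (m+1)*d) * (c-d)) * (c-d)^m := by ring
      _ ≤ (c * (c + m*d)) * (c-d)^m := mul_le_mul_of_nonneg_right step (pow_nonneg h1 m)
      _ = c * ((c + m*d) * (c-d)^m) := by ring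
      _ ≤ c * c^(m+1) := mul_le_mul_of_nonneg_left ih' hc
      _ = c^(m+1+1) := by ring

lemma keymax (m : ℕ) (p q t : ℝ) (hp : 0 ≤ p) (hq : 0 < q)
    (ht0 : 0 ≤ t) (ht1 : t ≤ 1) :
    (1 - t) ^ m * (p + q * t) ≤
      (1 - max 0 ((q - m * p) / (q * (m + 1)))) ^ m
        * (p + q * max 0 ((q - m * p) / (q * (m + 1)))) := by
  have hm : (0:ℝ) ≤ m := Nat.cast_nonneg m
  have hden : 0 < q * (m + 1) := by positivity
  rcases le_or_gt q ((m:ℝ) * p) with hqa | hqa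
  · -- boundary case: s = 0
    have hmax : max 0 ((q - (m:ℝ) * p) / (q * (m + 1))) = 0 := by
      apply max_eq_left
      apply div_nonpos_of_nonpos_of_nonneg (by linarith) (le_of_lt hden)
    rw [hmax]
    simp only [mul_zero, sub_zero, one_pow, add_zero, one_mul]
    have h1 : (1 - t) ^ m * (p + q * t) ≤ (1 - t) ^ m * (p + (m * p) * t) := by
      apply mul_le_mul_of_nonneg_left _ (pow_nonneg (by linarith) m)
      nlinarith
    have h2 := amgm m 1 t (by linarith) (by nlinarith)
    calc (1 - t) ^ m * (p + q * t) ≤ (1 - t) ^ m * (p + (m * p) * t) := h1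
      _ = p * ((1 + m * t) * (1 - t) ^ m) := by ring
      _ ≤ p * 1 ^ (m + 1) := mul_le_mul_of_nonneg_left (by simpa using h2) hp
      _ = p := by ring
  · -- interior case
    have hsnum : 0 ≤ q - (m:ℝ) * p := by linarith
    set s : ℝ := (q - (m:ℝ) * p) / (q * (m + 1)) with hsdef
    have hs0 : 0 ≤ s := div_nonneg hsnum (le_of_lt hden)
    have hmax : max 0 s = s := max_eq_right hs0
    rw [hmax]
    rcases Nat.eq_zero_or_pos m with rfl | hm1
    · have : s = 1 := by
        rw [hsdef]; push_cast; field_simp; ring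
      rw [this]; push_cast
      simp only [pow_zero, one_mul]
      nlinarith
    · have hm1' : (1:ℝ) ≤ m := by exact_mod_cast hm1
      set C : ℝ := (m:ℝ) * (p + q) / (m + 1) with hCdef
      have hs1 : p + q * s = (p + q) / (m + 1) := by
        rw [hsdef]; field_simp; ring
      have hs2 : 1 - s = (m:ℝ) * (p + q) / (q * (m + 1)) := by
        rw [hsdef]; field_simp; ring
      set d : ℝ := C - q * (1 - t) with hddef
      have hA : C + (m:ℝ) * d = (m:ℝ) * (p + q * t) := by
        rw [hddef, hCdef]; field_simp; ring
      have hB : C - d = q * (1 - t) := by rw [hddef]; ring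
      have h2 := amgm m C d
        (by rw [hB]; exact mul_nonneg hq.le (by linarith))
        (by rw [hA]; exact mul_nonneg hm (add_nonneg hp (mul_nonneg hq.le ht0)))
      rw [hA, hB] at h2
      -- h2 : m * (p + q*t) * (q*(1-t))^m ≤ C^(m+1)
      have hmne : (m:ℝ) ≠ 0 := by positivity
      have hs1' : p + q * s = C / m := by
        rw [hs1, hCdef]; field_simp
      have hs2' : 1 - s = C / q := by
        rw [hs2, hCdef]; field_simp
      have hrhs : (1 - s) ^ m * (p + q * s) * ((m:ℝ) * q ^ m) = C ^ (m + 1) := by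
        rw [hs1', hs2', div_pow]
        field_simp
        ring
      have hfac : 0 < (m:ℝ) * q ^ m := by positivity
      rw [← mul_le_mul_iff_of_pos_right hfac]
      rw [hrhs]
      calc (1 - t) ^ m * (p + q * t) * ((m:ℝ) * q ^ m)
          = (m:ℝ) * (p + q * t) * (q * (1 - t)) ^ m := by rw [mul_pow]; ring
        _ ≤ C ^ (m + 1) := h2

def uA (NA NT : ℕ) (σI σS σC δ τA τT : ℝ) : ℝ :=
  (1 - τA * (1 - τA) ^ (NA - 1) * (1 - τT) ^ NT) * δ
    + (1 - τA) ^ NA * (1 - τT) ^ NT * (σI - σC) + σC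
    + ((NA : ℝ) * τA * (1 - τA) ^ (NA - 1) * (1 - τT) ^ NT
        + (NT : ℝ) * τT * (1 - τT) ^ (NT - 1) * (1 - τA) ^ NA) * (σS - σC)

def uT (NA NT : ℕ) (σS r τA τT : ℝ) : ℝ :=
  τT * (1 - τT) ^ (NT - 1) * (1 - τA) ^ NA * σS * r

theorem stmt10 (NA NT : ℕ) (hNA : 1 ≤ NA) (hNT : 1 ≤ NT)
    (σI σS σC δ r : ℝ) (hσI : 0 < σI) (hI : σI < σS) (hSC : σS = σC)
    (hδ : σS ≤ δ) (hr : 0 < r)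
    (τAs τTs : ℝ)
    (hτAs : τAs = if (NA : ℝ) * (σS - σI) < δ then
        max 0 (((NA : ℝ) * (σI - σS) + δ) / ((NA : ℝ) * (σI - σC + δ))) else 0)
    (hτTs : τTs = 1 / (NT : ℝ)) :
    (∀ τA ∈ Set.Icc (0 : ℝ) 1,
        -uA NA NT σI σS σC δ τA τTs ≤ -uA NA NT σI σS σC δ τAs τTs) ∧
    (∀ τT ∈ Set.Icc (0 : ℝ) 1,
        uT NA NT σS r τAs τT ≤ uT NA NT σS r τAs τTs) := by
  subst hSC
  obtain ⟨a, rfl⟩ : ∃ a, NA = a + 1 := ⟨NA - 1, (Nat.succ_pred_eq_of_pos hNA).symm⟩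
  obtain ⟨b, rfl⟩ : ∃ b, NT = b + 1 := ⟨NT - 1, (Nat.succ_pred_eq_of_pos hNT).symm⟩
  have ha : (0:ℝ) ≤ a := Nat.cast_nonneg a
  have hb : (0:ℝ) ≤ b := Nat.cast_nonneg b
  have hp : 0 < σS - σI := by linarith
  have hq : 0 < σI - σS + δ := by linarith
  have hσS : 0 < σS := lt_trans hσI hI
  -- rewrite τAs in the keymax form
  have hτAs' : τAs = max 0 (((σI - σS + δ) - (a:ℝ) * (σS - σI)) / ((σI - σS + δ) * ((a:ℝ) + 1))) := by
    rw [hτAs]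
    split_ifs with h
    · congr 1
      push_cast
      rw [div_eq_div_iff (by positivity) (by positivity)]
      ring
    · push_cast at h
      symm
      apply max_eq_left
      apply div_nonpos_of_nonpos_of_nonneg (by linarith) (by positivity)
  have hτAs0 : 0 ≤ τAs := by rw [hτAs']; exact le_max_left _ _
  have hτAs1 : τAs ≤ 1 := by
    rw [hτAs']
    apply max_le (by norm_num)
    rw [div_le_one (by positivity)]
    nlinarith
  have hτTs0 : 0 ≤ τTs := by rw [hτTs]; positivity
  have hτTs1 : τTs ≤ 1 := by
    rw [hτTs]
    rw [div_le_one (by positivity)]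
    push_cast; linarith
  have hW : (0:ℝ) ≤ (1 - τTs) ^ (b + 1) := pow_nonneg (by linarith) _
  constructor
  · intro τA ⟨h0, h1⟩
    have key := keymax a (σS - σI) (σI - σS + δ) τA hp.le hq h0 h1
    rw [← hτAs'] at key
    have key' := mul_le_mul_of_nonneg_left key hW
    have e : ∀ τ : ℝ, uA (a+1) (b+1) σI σS σS δ τ τTs
        = δ + σS - (1 - τTs) ^ (b+1) * ((1 - τ) ^ a * ((σS - σI) + (σI - σS + δ) * τ)) := by
      intro τ
      simp only [uA, Nat.add_sub_cancel]
      ring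
    rw [e τA, e τAs]
    linarith
  · intro τT ⟨h0, h1⟩
    have key := keymax b 0 1 τT le_rfl one_pos h0 h1
    have hS' : max 0 ((1 - (b:ℝ) * 0) / (1 * ((b:ℝ) + 1))) = τTs := by
      have e0 : (1 - (b:ℝ) * 0) / (1 * ((b:ℝ) + 1)) = 1 / ((b:ℝ) + 1) := by
        rw [mul_zero, sub_zero, one_mul]
      rw [e0, hτTs, max_eq_right (by positivity)]
      push_cast
      ring
    rw [hS'] at key
    simp only [zero_add, one_mul] at key
    have hK : (0:ℝ) ≤ (1 - τAs) ^ (a+1) * (σS * r) :=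
      mul_nonneg (pow_nonneg (by linarith) _) (by positivity)
    have h3 := mul_le_mul_of_nonneg_right key hK
    simp only [uT, Nat.add_sub_cancel]
    calc τT * (1 - τT) ^ b * (1 - τAs) ^ (a+1) * σS * r
        = (1 - τT) ^ b * τT * ((1 - τAs) ^ (a+1) * (σS * r)) := by ring
      _ ≤ (1 - τTs) ^ b * τTs * ((1 - τAs) ^ (a+1) * (σS * r)) := h3
      _ = τTs * (1 - τTs) ^ b * (1 - τAs) ^ (a+1) * σS * r := by ring
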